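/- Let α be a partial action of a topological group G on a compact topological space X. Then there exists an open subgroup H of G such that X_{t⁻¹} = X for every t ∈ H (so that α restricted to H is a global action of H on X). In particular, if G is connected, then X_t = X for every t ∈ G, i.e. α is a global action. -/

import Mathlib

/-- A partial action of a topological group `G` on a topological space `X`. -/
structure TopPartialAction (G : Type*) (X : Type*) [Group G] [TopologicalSpace G]
    [IsTopologicalGroup G] [TopologicalSpace X] where
  dom : G → Set X
  act : G → X → X
  isOpen_dom : ∀ t, IsOpen (dom t)
  bijOn : ∀ t, Set.BijOn (act t) (dom t⁻¹) (dom t)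
  isOpen_graph : IsOpen {p : G × X | p.2 ∈ dom p.1⁻¹}
  continuousOn : ContinuousOn (fun p : G × X => act p.1 p.2) {p : G × X | p.2 ∈ dom p.1⁻¹}
  dom_one : dom 1 = Set.univ
  act_one : ∀ x, act 1 x = x
  act_comp : ∀ s t x, x ∈ dom t⁻¹ → act t x ∈ dom s⁻¹ →
    x ∈ dom (s * t)⁻¹ ∧ act (s * t) x = act s (act t x)

/-- The relation `(r, x) ∼ (s, y) ↔ x ∈ X_{r⁻¹ s} ∧ α_{s⁻¹ r}(x) = y` on `G × X`. -/
def TopPartialAction.rel {G X : Type*} [Group G] [TopologicalSpace G] [IsTopologicalGroup G]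
    [TopologicalSpace X] (α : TopPartialAction G X) (p q : G × X) : Prop :=
  p.2 ∈ α.dom (p.1⁻¹ * q.1) ∧ α.act (q.1⁻¹ * p.1) p.2 = q.2


section Aux

variable {G X : Type*} [Group G] [TopologicalSpace G] [IsTopologicalGroup G]
    [TopologicalSpace X] [CompactSpace X] (α : TopPartialAction G X)

/-- The set of `t` with full domain is open. -/
lemma TopPartialAction.isOpen_fullSet : IsOpen {t : G | α.dom t⁻¹ = Set.univ} := by
  rw [isOpen_iff_forall_mem_open]
  intro t ht
  have hsub : {t} ×ˢ (Set.univ : Set X) ⊆ {p : G × X | p.2 ∈ α.dom p.1⁻¹} := by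
    rintro ⟨s, x⟩ ⟨hs, -⟩
    simp only [Set.mem_singleton_iff] at hs
    subst hs
    show x ∈ α.dom s⁻¹
    rw [ht]; trivial
  obtain ⟨u, v, hu, hv, htu, hXv, huv⟩ :=
    generalized_tube_lemma isCompact_singleton isCompact_univ α.isOpen_graph hsub
  refine ⟨u, ?_, hu, htu rfl⟩
  intro s hs
  refine Set.eq_univ_of_forall fun x => ?_
  exact huv (Set.mk_mem_prod hs (hXv (Set.mem_univ x)))

omit [CompactSpace X] in
lemma TopPartialAction.full_mul {s t : G} (hs : α.dom s⁻¹ = Set.univ)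
    (ht : α.dom t⁻¹ = Set.univ) : α.dom (s * t)⁻¹ = Set.univ := by
  refine Set.eq_univ_of_forall fun x => ?_
  have hx : x ∈ α.dom t⁻¹ := ht ▸ Set.mem_univ x
  have hx' : α.act t x ∈ α.dom s⁻¹ := hs ▸ Set.mem_univ _
  exact (α.act_comp s t x hx hx').1

end Aux

/-- For a partial action of a topological group `G` on a compact space `X`, there is an
open subgroup `H ≤ G` on which the partial action is global (`X_{t⁻¹} = X` for `t ∈ H`);
in particular, if `G` is connected, the partial action is a global action. -/
theorem TopPartialAction.global_on_open_subgroup {G X : Type*} [Group G] [TopologicalSpace G]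
    [IsTopologicalGroup G] [TopologicalSpace X] [CompactSpace X] (α : TopPartialAction G X) :
    (∃ H : Subgroup G, IsOpen (H : Set G) ∧ ∀ t ∈ H, α.dom t⁻¹ = Set.univ) ∧
    (ConnectedSpace G → ∀ t : G, α.dom t = Set.univ) := by

  set U : Set G := {t : G | α.dom t⁻¹ = Set.univ} with hU
  have hUopen := α.isOpen_fullSet
  have h1 : (1 : G) ∈ U := by simp only [hU, Set.mem_setOf_eq, inv_one, α.dom_one]
  let H : Subgroup G :=
    { carrier := {t : G | α.dom t⁻¹ = Set.univ ∧ α.dom t = Set.univ}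
      one_mem' := by
        simp only [Set.mem_setOf_eq, inv_one, α.dom_one, and_self]
      inv_mem' := by
        rintro t ⟨h1, h2⟩
        exact ⟨by simpa using h2, by simpa using h1⟩
      mul_mem' := by
        rintro a b ⟨ha1, ha2⟩ ⟨hb1, hb2⟩
        refine ⟨α.full_mul ha1 hb1, ?_⟩
        have := α.full_mul (s := b⁻¹) (t := a⁻¹) (by simpa using hb2) (by simpa using ha2)
        simpa using this }
  have hHopen : IsOpen (H : Set G) := by
    have : (H : Set G) = U ∩ (fun t : G => t⁻¹) ⁻¹' U := by
      ext t
      simp only [Set.mem_inter_iff, Set.mem_preimage, hU, Set.mem_setOf_eq, inv_inv]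
      rfl
    rw [this]
    exact hUopen.inter (hUopen.preimage continuous_inv)
  refine ⟨⟨H, hHopen, fun t ht => ht.1⟩, fun hG t => ?_⟩
  have hHclosed : IsClosed (H : Set G) := Subgroup.isClosed_of_isOpen H hHopen
  have : (H : Set G) = Set.univ :=
    IsClopen.eq_univ ⟨hHclosed, hHopen⟩ ⟨1, H.one_mem⟩
  have ht : t ∈ H := by rw [← SetLike.mem_coe, this]; trivial
  exact ht.2
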